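/- Let k > 0 and α, β > 0. For any grid G of area A and any covering path of G with length L and T stops, αL + βT ≥ σ(A - 2k²), where σ = αγ + βγ²/(4kγ - 2) and γ = (4αk + β + √((4αk+β)β))/(2k(4αk+β)). -/

import Mathlib

set_option maxHeartbeats 1000000

open MeasureTheory

def dist1 (p q : ℝ × ℝ) : ℝ := |p.1 - q.1| + |p.2 - q.2|

def unitSquare (q : ℤ × ℤ) : Set (ℝ × ℝ) :=
  Set.Icc (q.1 : ℝ) ((q.1 : ℝ) + 1) ×ˢ Set.Icc (q.2 : ℝ) ((q.2 : ℝ) + 1)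

def IsGrid (G : Set (ℝ × ℝ)) : Prop :=
  ∃ Q : Finset (ℤ × ℤ), G = ⋃ q ∈ Q, unitSquare q

lemma vol_ball0 (r : ℝ) (hr : 0 ≤ r) :
    volume {p : ℝ × ℝ | |p.1| + |p.2| ≤ r} = ENNReal.ofReal (2*r^2) := by
  set f : ℝ × ℝ →ₗ[ℝ] ℝ × ℝ :=
    (LinearMap.fst ℝ ℝ ℝ + LinearMap.snd ℝ ℝ ℝ).prod
      (LinearMap.fst ℝ ℝ ℝ - LinearMap.snd ℝ ℝ ℝ) with hf
  have himg : {p : ℝ × ℝ | |p.1| + |p.2| ≤ r}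
      = f '' (Set.Icc (-(r/2)) (r/2) ×ˢ Set.Icc (-(r/2)) (r/2)) := by
    ext ⟨x, y⟩
    simp only [Set.mem_setOf_eq, Set.mem_image, Set.mem_prod, Set.mem_Icc, hf,
      LinearMap.prod_apply, Function.prod, LinearMap.add_apply, LinearMap.sub_apply,
      LinearMap.fst_apply, LinearMap.snd_apply, Prod.mk.injEq, Prod.exists]
    constructor
    · intro h
      refine ⟨(x+y)/2, (x-y)/2, ⟨⟨?_, ?_⟩, ?_, ?_⟩, by ring, by ring⟩ <;>
      · have h1 := abs_add_le x y
        have h2 := abs_sub x y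
        have h3 := abs_nonneg (x+y)
        have h4 := abs_nonneg (x-y)
        have h5 := neg_abs_le (x+y)
        have h6 := neg_abs_le (x-y)
        have h7 := le_abs_self (x+y)
        have h8 := le_abs_self (x-y)
        linarith
    · rintro ⟨u, v, ⟨⟨h1, h2⟩, h3, h4⟩, rfl, rfl⟩
      rcases abs_cases (u+v) with ⟨e1, _⟩ | ⟨e1, _⟩ <;>
        rcases abs_cases (u-v) with ⟨e2, _⟩ | ⟨e2, _⟩ <;> linarith
  have hdet : LinearMap.det f = -2 := by
    have : LinearMap.toMatrix (Module.Basis.finTwoProd ℝ) (Module.Basis.finTwoProd ℝ) f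
        = !![1, 1; 1, -1] := by
      ext i j
      fin_cases i <;> fin_cases j <;>
        simp [LinearMap.toMatrix_apply, hf, Module.Basis.finTwoProd]
    rw [← LinearMap.det_toMatrix (Module.Basis.finTwoProd ℝ), this]
    simp [Matrix.det_fin_two_of]; norm_num
  rw [himg, Measure.addHaar_image_linearMap volume f, hdet]
  rw [Measure.volume_eq_prod, Measure.prod_prod, Real.volume_Icc]
  rw [show r/2 - -(r/2) = r by ring, ← ENNReal.ofReal_mul hr,
    ← ENNReal.ofReal_mul (by norm_num)]
  norm_num
  ring_nf

lemma measurable_ball1 (c : ℝ × ℝ) (r : ℝ) :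
    MeasurableSet {p : ℝ × ℝ | dist1 p c ≤ r} := by
  have : IsClosed {p : ℝ × ℝ | dist1 p c ≤ r} := by
    apply isClosed_le _ continuous_const
    unfold dist1
    fun_prop
  exact this.measurableSet

lemma vol_ball1 (c : ℝ × ℝ) (r : ℝ) (hr : 0 ≤ r) :
    volume {p : ℝ × ℝ | dist1 p c ≤ r} = ENNReal.ofReal (2*r^2) := by
  have : {p : ℝ × ℝ | dist1 p c ≤ r}
      = (fun p => p + (-c)) ⁻¹' {p : ℝ × ℝ | |p.1| + |p.2| ≤ r} := by
    ext p
    simp [dist1, Set.mem_preimage, sub_eq_add_neg]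
  rw [this, measure_preimage_add_right, vol_ball0 r hr]

lemma dist1_nonneg (p q : ℝ × ℝ) : 0 ≤ dist1 p q :=
  add_nonneg (abs_nonneg _) (abs_nonneg _)

lemma dist1_triangle (p q r : ℝ × ℝ) : dist1 p r ≤ dist1 p q + dist1 q r := by
  unfold dist1
  have h1 := abs_sub_le p.1 q.1 r.1
  have h2 := abs_sub_le p.2 q.2 r.2
  linarith

theorem stmt17 (α β k : ℝ) (hα : 0 < α) (hβ : 0 < β) (hk : 0 < k)
    (γ : ℝ) (hγ : γ = (4*α*k + β + Real.sqrt ((4*α*k+β)*β)) / (2*k*(4*α*k+β)))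
    (σ : ℝ) (hσ : σ = α*γ + β*γ^2/(4*k*γ - 2))
    (G : Set (ℝ × ℝ)) (hG : IsGrid G)
    (A : ℝ) (hA : A = (volume G).toReal)
    (T : ℕ) (hT : 1 ≤ T) (S : ℕ → ℝ × ℝ)
    (hcov : ∀ p ∈ G, ∃ i < T, dist1 p (S i) ≤ k)
    (L : ℝ) (hL : L = ∑ i ∈ Finset.range (T-1), dist1 (S (i+1)) (S i)) :
    σ*(A - 2*k^2) ≤ α*L + β*(T:ℝ) := by
  classical
  -- Algebra: closed form for σ
  have hs : 0 < 4*α*k + β := by nlinarith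
  set t := Real.sqrt ((4*α*k+β)*β) with htdef
  have htpos : 0 < t := Real.sqrt_pos.mpr (by positivity)
  have ht2 : t^2 = (4*α*k+β)*β := Real.sq_sqrt (by positivity)
  have hσval : σ = ((4*α*k+β) + β + 2*t)/(8*k^2) := by
    have hden : 4*k*γ - 2 = 2*t/(4*α*k+β) := by
      rw [hγ]; field_simp; ring
    rw [hσ, hden, hγ]
    field_simp
    linear_combination (-32*α*k - 8*β) * ht2
  have hσpos : 0 < σ := by rw [hσval]; positivity
  have hquad : 4*k^2*σ^2 - (4*k*α + 2*β)*σ + α^2 = 0 := by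
    rw [hσval]
    field_simp
    linear_combination (16) * ht2
  obtain ⟨c, hc⟩ : ∃ c : ℝ, c = 2*k - α/σ := ⟨_, rfl⟩
  have hck : c ≤ 2*k := by
    rw [hc]
    have : 0 < α/σ := div_pos hα hσpos
    linarith
  have hσc : σ * (2*k - c) = α := by
    rw [hc]; field_simp; ring
  have hσc2 : σ * c^2 = 2*β := by
    have h1 : σ * (σ * c^2) = σ * (2*β) := by
      have : σ * (σ * c^2) = 4*k^2*σ^2 - (4*k*α)*σ + α^2 := by
        rw [hc]; field_simp; ring
      rw [this]; nlinarith [hquad]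
    exact mul_left_cancel₀ (ne_of_gt hσpos) h1
  -- Geometry
  set B : ℕ → Set (ℝ × ℝ) := fun i => {p : ℝ × ℝ | dist1 p (S i) ≤ k} with hB
  set d : ℕ → ℝ := fun i => dist1 (S (i+1)) (S i) with hd
  have hdnn : ∀ i, 0 ≤ d i := fun i => dist1_nonneg _ _
  set ell : ℝ → ℝ := fun x => (2*k - c)*x + c^2/2 with hell
  have hellnn : ∀ x, 0 ≤ x → 0 ≤ ell x := by
    intro x hx
    have h1 : 0 ≤ (2*k - c)*x := mul_nonneg (by linarith) hx
    have h2 := sq_nonneg c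
    simp only [hell]; nlinarith
  -- per-step bound
  have hstep : ∀ i, volume (B (i+1) \ B i) ≤ ENNReal.ofReal (ell (d i)) := by
    intro i
    by_cases hdle : d i ≤ 2*k
    · set m : ℝ × ℝ := ((S (i+1)).1/2 + (S i).1/2, (S (i+1)).2/2 + (S i).2/2) with hm
      set sm : Set (ℝ × ℝ) := {p : ℝ × ℝ | dist1 p m ≤ k - d i / 2} with hsm
      have hm1 : dist1 m (S (i+1)) = d i / 2 := by
        simp only [hm, hd, dist1]
        rw [show (S (i+1)).1/2 + (S i).1/2 - (S (i+1)).1 = -(((S (i+1)).1 - (S i).1)/2) by ring,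
          show (S (i+1)).2/2 + (S i).2/2 - (S (i+1)).2 = -(((S (i+1)).2 - (S i).2)/2) by ring,
          abs_neg, abs_neg, abs_div, abs_div]
        norm_num; ring
      have hm2 : dist1 m (S i) = d i / 2 := by
        simp only [hm, hd, dist1]
        rw [show (S (i+1)).1/2 + (S i).1/2 - (S i).1 = ((S (i+1)).1 - (S i).1)/2 by ring,
          show (S (i+1)).2/2 + (S i).2/2 - (S i).2 = ((S (i+1)).2 - (S i).2)/2 by ring,
          abs_div, abs_div]
        norm_num; ring
      have hsm1 : sm ⊆ B (i+1) := by
        intro p hp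
        simp only [hsm, Set.mem_setOf_eq] at hp
        have := dist1_triangle p m (S (i+1))
        simp only [hB, Set.mem_setOf_eq]
        rw [hm1] at this; linarith
      have hsm2 : sm ⊆ B i := by
        intro p hp
        simp only [hsm, Set.mem_setOf_eq] at hp
        have := dist1_triangle p m (S i)
        simp only [hB, Set.mem_setOf_eq]
        rw [hm2] at this; linarith
      have hdisj : Disjoint (B (i+1) \ B i) sm :=
        Set.disjoint_left.mpr (fun p hp hps => hp.2 (hsm2 hps))
      have hunion : (B (i+1) \ B i) ∪ sm ⊆ B (i+1) :=
        Set.union_subset Set.diff_subset hsm1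
      have hkey : volume (B (i+1) \ B i) + ENNReal.ofReal (2*(k - d i/2)^2)
          ≤ ENNReal.ofReal (2*k^2) := by
        rw [← vol_ball1 m (k - d i/2) (by linarith), ← vol_ball1 (S (i+1)) k hk.le]
        rw [← measure_union hdisj (measurable_ball1 m _)]
        exact measure_mono hunion
      have h2 : ENNReal.ofReal (2*k^2)
          ≤ ENNReal.ofReal (ell (d i)) + ENNReal.ofReal (2*(k - d i/2)^2) := by
        rw [← ENNReal.ofReal_add (hellnn _ (hdnn i)) (by positivity)]
        apply ENNReal.ofReal_le_ofReal
        have := hdnn i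
        simp only [hell]; nlinarith [sq_nonneg (d i - c)]
      have := le_trans hkey h2
      exact (ENNReal.add_le_add_iff_right ENNReal.ofReal_ne_top).mp this
    · calc volume (B (i+1) \ B i) ≤ volume (B (i+1)) := measure_mono Set.diff_subset
        _ = ENNReal.ofReal (2*k^2) := vol_ball1 _ _ hk.le
        _ ≤ ENNReal.ofReal (ell (d i)) := by
            apply ENNReal.ofReal_le_ofReal
            simp only [hell]
            nlinarith [sq_nonneg (2*k - c)]
  -- union subset
  have hsub : (⋃ i ∈ Finset.range T, B i)
      ⊆ B 0 ∪ ⋃ i ∈ Finset.range (T-1), (B (i+1) \ B i) := by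
    intro p hp
    simp only [Set.mem_iUnion, Finset.mem_range] at hp
    obtain ⟨i, hiT, hpi⟩ := hp
    by_cases h0 : p ∈ B 0
    · exact Or.inl h0
    · right
      have hex : ∃ j, p ∈ B j := ⟨i, hpi⟩
      have hfind := Nat.find_spec hex
      have hji : Nat.find hex ≤ i := Nat.find_min' hex hpi
      have hj0 : Nat.find hex ≠ 0 := fun h => h0 (h ▸ hfind)
      obtain ⟨m, hm⟩ := Nat.exists_eq_succ_of_ne_zero hj0
      have hpm : p ∉ B m := Nat.find_min hex (by omega)
      rw [hm] at hfind
      simp only [Set.mem_iUnion, Finset.mem_range]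
      exact ⟨m, by omega, hfind, hpm⟩
  -- area bound
  have hGsub : G ⊆ ⋃ i ∈ Finset.range T, B i := by
    intro p hp
    obtain ⟨i, hiT, hpi⟩ := hcov p hp
    simp only [Set.mem_iUnion, Finset.mem_range]
    exact ⟨i, hiT, hpi⟩
  have hvol : volume G ≤ ENNReal.ofReal (2*k^2 + ∑ i ∈ Finset.range (T-1), ell (d i)) := by
    calc volume G ≤ volume (B 0 ∪ ⋃ i ∈ Finset.range (T-1), (B (i+1) \ B i)) :=
          measure_mono (hGsub.trans hsub)
      _ ≤ volume (B 0) + volume (⋃ i ∈ Finset.range (T-1), (B (i+1) \ B i)) :=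
          measure_union_le _ _
      _ ≤ volume (B 0) + ∑ i ∈ Finset.range (T-1), volume (B (i+1) \ B i) := by
          gcongr
          exact measure_biUnion_finset_le _ _
      _ ≤ ENNReal.ofReal (2*k^2) + ∑ i ∈ Finset.range (T-1), ENNReal.ofReal (ell (d i)) := by
          gcongr
          · exact le_of_eq (vol_ball1 _ _ hk.le)
          · exact hstep _
      _ = ENNReal.ofReal (2*k^2 + ∑ i ∈ Finset.range (T-1), ell (d i)) := by
          rw [← ENNReal.ofReal_sum_of_nonneg (fun i _ => hellnn _ (hdnn i)),
            ← ENNReal.ofReal_add (by positivity)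
              (Finset.sum_nonneg (fun i _ => hellnn _ (hdnn i)))]
  have hAle : A ≤ 2*k^2 + ∑ i ∈ Finset.range (T-1), ell (d i) := by
    rw [hA]
    exact ENNReal.toReal_le_of_le_ofReal
      (add_nonneg (by positivity) (Finset.sum_nonneg (fun i _ => hellnn _ (hdnn i)))) hvol
  have hsum : ∑ i ∈ Finset.range (T-1), ell (d i)
      = (2*k - c) * L + ((T-1 : ℕ) : ℝ) * (c^2/2) := by
    simp only [hell, hL]
    rw [Finset.sum_add_distrib, Finset.sum_const, Finset.card_range, ← Finset.mul_sum]
    simp [nsmul_eq_mul, hd]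
  have hLnn : 0 ≤ L := by
    rw [hL]; exact Finset.sum_nonneg (fun i _ => dist1_nonneg _ _)
  have hTcast : ((T-1 : ℕ) : ℝ) ≤ (T : ℝ) := Nat.cast_le.mpr (Nat.sub_le _ _)
  have hfinal : A - 2*k^2 ≤ (2*k - c) * L + (T : ℝ) * (c^2/2) := by
    have h1 : ((T-1 : ℕ) : ℝ) * (c^2/2) ≤ (T : ℝ) * (c^2/2) := by
      apply mul_le_mul_of_nonneg_right hTcast (by positivity)
    rw [hsum] at hAle
    linarith
  calc σ*(A - 2*k^2) ≤ σ * ((2*k - c) * L + (T : ℝ) * (c^2/2)) :=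
        mul_le_mul_of_nonneg_left hfinal hσpos.le
    _ = (σ * (2*k - c)) * L + (σ * c^2 / 2) * (T : ℝ) := by ring
    _ = α * L + β * (T : ℝ) := by rw [hσc, hσc2]; ring
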